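/- arXiv:1807.08424 — 5 statements merged into one kernel-verified Lean document; each statement's English description precedes it below -/
import Mathlib

section
/- Let H^{(1)}, …, H^{(m)} each be a one-dimensional k-local Hamiltonian with unit-norm terms on the n-site chain, and let O be an operator supported on an adjacent interval L of sites with |L| = l₀. Then ‖ad_{H^{(m)}} ∘ ⋯ ∘ ad_{H^{(2)}} ∘ ad_{H^{(1)}}(O)‖ ≤ ‖O‖ · Σ_{π ∈ {−1,0,+1}^m} Π_{s=1}^m 2·K_s(π), where K_s(π) := k − 1 if π_s ≠ 0, and K_s(π) := l₀ + (k−1)·#{ j < s : π_j ≠ 0 } if π_s = 0. -/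
open scoped Matrix.Norms.L2Operator

/-- Operators on the `n`-site chain with local dimension `d`: matrices indexed by
configurations `Fin n → Fin d`, acting on `(ℂ^d)^{⊗n}`, with the ℓ²→ℓ² operator norm. -/
abbrev ChainOp (n d : ℕ) := Matrix (Fin n → Fin d) (Fin n → Fin d) ℂ

/-- `M` is supported on the set of sites `L`: entries vanish whenever the two configurations
differ at a site outside `L`, and entries depend only on the restrictions of the
configurations to `L`. -/
def SupportedOn {n d : ℕ} (M : ChainOp n d) (L : Finset (Fin n)) : Prop :=
  (∀ x y : Fin n → Fin d, (∃ i ∉ L, x i ≠ y i) → M x y = 0) ∧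
  (∀ x y x' y' : Fin n → Fin d,
      (∀ i ∈ L, x i = x' i) → (∀ i ∈ L, y i = y' i) →
      (∀ i ∉ L, x i = y i) → (∀ i ∉ L, x' i = y' i) → M x y = M x' y')

/-- The interval of sites `{i : a ≤ i ≤ b}` (automatically intersected with `{0,…,n-1}`). -/
def chainInterval (n : ℕ) (a b : ℕ) : Finset (Fin n) :=
  Finset.univ.filter fun i : Fin n => a ≤ (i : ℕ) ∧ (i : ℕ) ≤ b

/-- `H` is a one-dimensional `k`-local Hamiltonian with unit-norm terms:
`H = Σ_j h_j` where `h_j` is supported on `{j, …, j+k-1} ∩ {0,…,n-1}` and `‖h_j‖ ≤ 1`. -/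
def IsLocalHam (n d k : ℕ) (H : ChainOp n d) : Prop :=
  ∃ h : Fin n → ChainOp n d,
    H = ∑ j, h j ∧
    ∀ j : Fin n, SupportedOn (h j) (chainInterval n j ((j : ℕ) + k - 1)) ∧ ‖h j‖ ≤ 1


/-- The adjoint action `ad_H(O) := H·O − O·H`. -/
-- (noncomputable since matrix multiplication over ℂ is noncomputable)
noncomputable def ad {n d : ℕ} (H O : ChainOp n d) : ChainOp n d := H * O - O * H

/-- The iterated commutator `ad_{H^{(m)}} ∘ ⋯ ∘ ad_{H^{(2)}} ∘ ad_{H^{(1)}} (O)`. -/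
noncomputable def multiAd {n d : ℕ} : {m : ℕ} → (Fin m → ChainOp n d) → ChainOp n d → ChainOp n d
  | 0, _, O => O
  | m + 1, Hs, O => ad (Hs (Fin.last m)) (multiAd (fun j => Hs j.castSucc) O)

/-- The factor `K_s(π)`: it equals `k − 1` if `π_s ≠ 0`, and
`l₀ + (k−1)·#{j < s : π_j ≠ 0}` if `π_s = 0`. -/
def Kfac (k l₀ : ℕ) {m : ℕ} (π : Fin m → SignType) (s : Fin m) : ℕ :=
  if π s = 0 then
    l₀ + (k - 1) * (Finset.univ.filter fun j : Fin m => j < s ∧ π j ≠ 0).card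
  else k - 1

section Supp
variable {n d : ℕ}

lemma suppMono {M : ChainOp n d} {L L' : Finset (Fin n)} (hLL : L ⊆ L')
    (h : SupportedOn M L) : SupportedOn M L' := by
  obtain ⟨h1, h2⟩ := h
  constructor
  · rintro x y ⟨i, hi, hxy⟩
    exact h1 x y ⟨i, fun hiL => hi (hLL hiL), hxy⟩
  · intro x y x' y' hx hy hxy hx'y'
    by_cases hc : ∀ i ∉ L, x i = y i
    · refine h2 x y x' y' (fun i hi => hx i (hLL hi)) (fun i hi => hy i (hLL hi)) hc ?_
      intro i hi
      by_cases hi' : i ∈ L'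
      · rw [← hx i hi', ← hy i hi', hc i hi]
      · exact hx'y' i hi'
    · push_neg at hc
      obtain ⟨i, hi, hne⟩ := hc
      have hiL' : i ∈ L' := by
        by_contra hi'
        exact hne (hxy i hi')
      rw [h1 x y ⟨i, hi, hne⟩, h1 x' y' ⟨i, hi, by rw [← hx i hiL', ← hy i hiL']; exact hne⟩]

lemma suppZero (L : Finset (Fin n)) : SupportedOn (0 : ChainOp n d) L :=
  ⟨fun _ _ _ => rfl, fun _ _ _ _ _ _ _ _ => rfl⟩

lemma suppAdd {M N : ChainOp n d} {L : Finset (Fin n)}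
    (hM : SupportedOn M L) (hN : SupportedOn N L) : SupportedOn (M + N) L := by
  constructor
  · intro x y h
    show M x y + N x y = 0
    rw [hM.1 x y h, hN.1 x y h, add_zero]
  · intro x y x' y' hx hy hxy hx'y'
    show M x y + N x y = M x' y' + N x' y'
    rw [hM.2 x y x' y' hx hy hxy hx'y', hN.2 x y x' y' hx hy hxy hx'y']

lemma suppNeg {M : ChainOp n d} {L : Finset (Fin n)}
    (hM : SupportedOn M L) : SupportedOn (-M) L := by
  constructor
  · intro x y h
    show -(M x y) = 0
    rw [hM.1 x y h, neg_zero]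
  · intro x y x' y' hx hy hxy hx'y'
    show -(M x y) = -(M x' y')
    rw [hM.2 x y x' y' hx hy hxy hx'y']

lemma suppSub {M N : ChainOp n d} {L : Finset (Fin n)}
    (hM : SupportedOn M L) (hN : SupportedOn N L) : SupportedOn (M - N) L := by
  rw [sub_eq_add_neg]; exact suppAdd hM (suppNeg hN)

lemma suppSum {α : Type*} {s : Finset α} {f : α → ChainOp n d} {L : Finset (Fin n)}
    (h : ∀ a ∈ s, SupportedOn (f a) L) : SupportedOn (∑ a ∈ s, f a) L := by
  classical
  induction s using Finset.induction_on with
  | empty => simpa using suppZero L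
  | insert _ _ hnot ih =>
    rw [Finset.sum_insert hnot]
    exact suppAdd (h _ (Finset.mem_insert_self _ _))
      (ih fun a ha => h a (Finset.mem_insert_of_mem ha))

lemma suppMul {M N : ChainOp n d} {L : Finset (Fin n)}
    (hM : SupportedOn M L) (hN : SupportedOn N L) : SupportedOn (M * N) L := by
  classical
  constructor
  · rintro x y ⟨i, hi, hxy⟩
    show ∑ z, M x z * N z y = 0
    apply Finset.sum_eq_zero
    intro z _
    by_cases hz : z i = x i
    · rw [hN.1 z y ⟨i, hi, by rw [hz]; exact hxy⟩, mul_zero]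
    · rw [hM.1 x z ⟨i, hi, fun h => hz h.symm⟩, zero_mul]
  · intro x y x' y' hx hy hxy hx'y'
    show ∑ z, M x z * N z y = ∑ z, M x' z * N z y'
    have key : ∀ (u v : Fin n → Fin d), (∀ i ∉ L, u i = v i) →
        ∑ z, M u z * N z v
          = ∑ z ∈ Finset.univ.filter (fun z => ∀ i ∉ L, z i = u i), M u z * N z v := by
      intro u v huv
      refine (Finset.sum_subset (Finset.subset_univ _) ?_).symm
      intro z _ hz
      simp only [Finset.mem_filter, Finset.mem_univ, true_and] at hz
      push_neg at hz
      obtain ⟨i, hi, hne⟩ := hz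
      rw [hM.1 u z ⟨i, hi, fun h => hne h.symm⟩, zero_mul]
    rw [key x y hxy, key x' y' hx'y']
    refine Finset.sum_nbij' (fun z => fun i => if i ∈ L then z i else x' i)
      (fun w => fun i => if i ∈ L then w i else x i) ?_ ?_ ?_ ?_ ?_
    · intro z hz
      simp only [Finset.mem_filter, Finset.mem_univ, true_and]
      intro i hi
      simp [hi]
    · intro w hw
      simp only [Finset.mem_filter, Finset.mem_univ, true_and]
      intro i hi
      simp [hi]
    · intro z hz
      simp only [Finset.mem_filter, Finset.mem_univ, true_and] at hz
      funext i
      by_cases hi : i ∈ L <;> simp [hi, hz i]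
    · intro w hw
      simp only [Finset.mem_filter, Finset.mem_univ, true_and] at hw
      funext i
      by_cases hi : i ∈ L <;> simp [hi, hw i]
    · intro z hz
      simp only [Finset.mem_filter, Finset.mem_univ, true_and] at hz
      have hMeq : M x z = M x' (fun i => if i ∈ L then z i else x' i) := by
        refine hM.2 x z x' _ hx (fun i hi => by simp [hi]) (fun i hi => (hz i hi).symm)
          (fun i hi => by simp [hi])
      have hNeq : N z y = N (fun i => if i ∈ L then z i else x' i) y' := by
        refine hN.2 z y _ y' (fun i hi => by simp [hi]) hy
          (fun i hi => by rw [hz i hi]; exact hxy i hi)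
          (fun i hi => by simp [hi, hx'y' i hi])
      rw [hMeq, hNeq]

lemma suppCommute {M N : ChainOp n d} {L₁ L₂ : Finset (Fin n)}
    (hM : SupportedOn M L₁) (hN : SupportedOn N L₂) (hd : Disjoint L₁ L₂) :
    M * N = N * M := by
  classical
  funext x y
  show ∑ z, M x z * N z y = ∑ z, N x z * M z y
  by_cases hout : ∀ i, i ∉ L₁ → i ∉ L₂ → x i = y i
  case neg =>
    push_neg at hout
    obtain ⟨i, h1, h2, hne⟩ := hout
    rw [Finset.sum_eq_zero, Finset.sum_eq_zero]
    · intro z _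
      by_cases hz : z i = x i
      · rw [hM.1 z y ⟨i, h1, by rw [hz]; exact hne⟩, mul_zero]
      · rw [hN.1 x z ⟨i, h2, fun h => hz h.symm⟩, zero_mul]
    · intro z _
      by_cases hz : z i = x i
      · rw [hN.1 z y ⟨i, h2, by rw [hz]; exact hne⟩, mul_zero]
      · rw [hM.1 x z ⟨i, h1, fun h => hz h.symm⟩, zero_mul]
  case pos =>
  set w₁ : Fin n → Fin d := fun i => if i ∈ L₁ then y i else x i with hw₁
  set w₂ : Fin n → Fin d := fun i => if i ∈ L₂ then y i else x i with hw₂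
  have hL12 : ∀ i ∈ L₁, i ∉ L₂ := fun i hi => Finset.disjoint_left.mp hd hi
  have hL21 : ∀ i ∈ L₂, i ∉ L₁ := fun i hi => Finset.disjoint_right.mp hd hi
  have e1 : ∑ z, M x z * N z y = M x w₁ * N w₁ y := by
    refine Finset.sum_eq_single w₁ ?_ (by simp)
    intro z _ hzne
    by_cases hz1 : ∀ i ∉ L₁, z i = x i
    · have : ∃ i ∈ L₁, z i ≠ y i := by
        by_contra hcon
        push_neg at hcon
        exact hzne (funext fun i => by
          by_cases hi : i ∈ L₁
          · rw [hcon i hi]; simp [hw₁, hi]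
          · rw [hz1 i hi]; simp [hw₁, hi])
      obtain ⟨i, hi, hne⟩ := this
      rw [hN.1 z y ⟨i, hL12 i hi, hne⟩, mul_zero]
    · push_neg at hz1
      obtain ⟨i, hi, hne⟩ := hz1
      rw [hM.1 x z ⟨i, hi, fun h => hne h.symm⟩, zero_mul]
  have e2 : ∑ z, N x z * M z y = N x w₂ * M w₂ y := by
    refine Finset.sum_eq_single w₂ ?_ (by simp)
    intro z _ hzne
    by_cases hz1 : ∀ i ∉ L₂, z i = x i
    · have : ∃ i ∈ L₂, z i ≠ y i := by
        by_contra hcon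
        push_neg at hcon
        exact hzne (funext fun i => by
          by_cases hi : i ∈ L₂
          · rw [hcon i hi]; simp [hw₂, hi]
          · rw [hz1 i hi]; simp [hw₂, hi])
      obtain ⟨i, hi, hne⟩ := this
      rw [hM.1 z y ⟨i, hL21 i hi, hne⟩, mul_zero]
    · push_neg at hz1
      obtain ⟨i, hi, hne⟩ := hz1
      rw [hN.1 x z ⟨i, hi, fun h => hne h.symm⟩, zero_mul]
  rw [e1, e2]
  have hMeq : M x w₁ = M w₂ y := by
    refine hM.2 x w₁ w₂ y (fun i hi => by simp [hw₂, hi, hL12 i hi])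
      (fun i hi => by simp [hw₁, hi]) (fun i hi => by simp [hw₁, hi]) ?_
    intro i hi
    by_cases hi2 : i ∈ L₂
    · simp [hw₂, hi2]
    · simp [hw₂, hi2, hout i hi hi2]
  have hNeq : N w₁ y = N x w₂ := by
    refine (hN.2 x w₂ w₁ y (fun i hi => by simp [hw₁, hi, hL21 i hi])
      (fun i hi => by simp [hw₂, hi]) (fun i hi => by simp [hw₂, hi]) ?_).symm
    intro i hi
    by_cases hi1 : i ∈ L₁
    · simp [hw₁, hi1]
    · simp [hw₁, hi1, hout i hi1 hi]
  rw [hMeq, hNeq]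
  ring

end Supp

section CI
variable {n d : ℕ}

lemma chainInterval_mem {a b : ℕ} {i : Fin n} :
    i ∈ chainInterval n a b ↔ a ≤ (i : ℕ) ∧ (i : ℕ) ≤ b := by
  simp [chainInterval]

lemma chainInterval_subset {a₁ b₁ a₂ b₂ : ℕ} (h1 : a₂ ≤ a₁) (h2 : b₁ ≤ b₂) :
    chainInterval n a₁ b₁ ⊆ chainInterval n a₂ b₂ := by
  intro i hi
  rw [chainInterval_mem] at *
  omega

lemma chainInterval_card (a b : ℕ) :
    (chainInterval n a b).card = min (b + 1) n - a := by
  classical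
  rw [show min (b+1) n - a = (Finset.Ico a (min (b+1) n)).card by rw [Nat.card_Ico]]
  refine Finset.card_bij' (fun i _ => (i : ℕ)) (fun v hv => ⟨v, ?_⟩) ?_ ?_ ?_ ?_
  · simp only [Finset.mem_Ico] at hv; omega
  · intro i hi; rw [chainInterval_mem] at hi
    simp only [Finset.mem_Ico]; omega
  · intro v hv; simp only [Finset.mem_Ico] at hv
    rw [chainInterval_mem]; simp; omega
  · intro i hi; rfl
  · intro v hv; rfl

lemma chainInterval_disjoint {a₁ b₁ a₂ b₂ : ℕ} (h : b₁ < a₂ ∨ b₂ < a₁) :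
    Disjoint (chainInterval n a₁ b₁) (chainInterval n a₂ b₂) := by
  rw [Finset.disjoint_left]
  intro i hi1 hi2
  rw [chainInterval_mem] at hi1 hi2
  omega

lemma card_filter_val_le (P : Fin n → Prop) [DecidablePred P] (lo hi : ℕ)
    (h : ∀ j, P j → lo ≤ (j : ℕ) ∧ (j : ℕ) < hi) :
    (Finset.univ.filter P).card ≤ hi - lo := by
  rw [show hi - lo = (Finset.Ico lo hi).card by rw [Nat.card_Ico]]
  refine Finset.card_le_card_of_injOn (fun j => (j : ℕ)) ?_ ?_
  · intro j hj
    simp only [Finset.mem_coe, Finset.mem_filter, Finset.mem_univ, true_and] at hj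
    simp only [Finset.mem_coe, Finset.mem_Ico]
    exact h j hj
  · intro u _ v _ huv
    exact Fin.val_injective huv

lemma norm_ad_le {H T : ChainOp n d} (hH : ‖H‖ ≤ 1) : ‖ad H T‖ ≤ 2 * ‖T‖ := by
  have h1 : ‖H * T‖ ≤ ‖H‖ * ‖T‖ := Matrix.l2_opNorm_mul H T
  have h2 : ‖T * H‖ ≤ ‖T‖ * ‖H‖ := Matrix.l2_opNorm_mul T H
  have h3 : ‖ad H T‖ ≤ ‖H * T‖ + ‖T * H‖ := norm_sub_le _ _
  have h0 : (0:ℝ) ≤ ‖T‖ := norm_nonneg _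
  have h0' : (0:ℝ) ≤ ‖H‖ := norm_nonneg _
  nlinarith

lemma step {k : ℕ} (hk : 2 ≤ k) {H : ChainOp n d} (hH : IsLocalHam n d k H)
    {a' b' : ℕ} (hab : a' + k ≤ b' + 2)
    {T : ChainOp n d} (hT : SupportedOn T (chainInterval n a' b')) :
    ∃ Tneg Tzero Tpos : ChainOp n d,
      ad H T = Tneg + Tzero + Tpos ∧
      (SupportedOn Tneg (chainInterval n (a' - (k-1)) b') ∧
        ‖Tneg‖ ≤ 2 * ((k-1 : ℕ) : ℝ) * ‖T‖) ∧
      (SupportedOn Tzero (chainInterval n a' b') ∧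
        ‖Tzero‖ ≤ 2 * ((min (b'+2-k) n - a' : ℕ) : ℝ) * ‖T‖) ∧
      (SupportedOn Tpos (chainInterval n a' (b'+(k-1))) ∧
        ‖Tpos‖ ≤ 2 * ((k-1 : ℕ) : ℝ) * ‖T‖) := by
  classical
  obtain ⟨h, rfl, hprops⟩ := hH
  set Cneg := Finset.univ.filter (fun j : Fin n => (j:ℕ) < a' ∧ a' ≤ (j:ℕ)+k-1) with hCneg
  set Czero := Finset.univ.filter (fun j : Fin n => a' ≤ (j:ℕ) ∧ (j:ℕ)+k-1 ≤ b') with hCzero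
  set Cpos := Finset.univ.filter
    (fun j : Fin n => a' ≤ (j:ℕ) ∧ (j:ℕ) ≤ b' ∧ b' < (j:ℕ)+k-1) with hCpos
  refine ⟨∑ j ∈ Cneg, ad (h j) T, ∑ j ∈ Czero, ad (h j) T, ∑ j ∈ Cpos, ad (h j) T,
    ?_, ⟨?_, ?_⟩, ⟨?_, ?_⟩, ⟨?_, ?_⟩⟩
  · -- decomposition
    have hlin : ad (∑ j, h j) T = ∑ j, ad (h j) T := by
      unfold ad
      rw [Finset.sum_mul, Finset.mul_sum, ← Finset.sum_sub_distrib]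
    rw [hlin]
    have hU : ∑ j, ad (h j) T = ∑ j ∈ Cneg ∪ Czero ∪ Cpos, ad (h j) T := by
      refine (Finset.sum_subset (Finset.subset_univ _) ?_).symm
      intro j _ hj
      simp only [Finset.mem_union, hCneg, hCzero, hCpos, Finset.mem_filter,
        Finset.mem_univ, true_and] at hj
      push_neg at hj
      have hdisj : (j:ℕ)+k-1 < a' ∨ b' < (j:ℕ) := by omega
      have : h j * T = T * h j :=
        suppCommute (hprops j).1 hT (by
          rcases hdisj with hc | hc
          · exact chainInterval_disjoint (Or.inl hc)
          · exact chainInterval_disjoint (Or.inr hc))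
      unfold ad
      rw [this, sub_self]
    rw [hU]
    rw [Finset.sum_union, Finset.sum_union]
    · rw [Finset.disjoint_left]
      intro j hj1 hj2
      simp only [hCneg, hCzero, hCpos, Finset.mem_union, Finset.mem_filter,
        Finset.mem_univ, true_and] at hj1 hj2
      omega
    · rw [Finset.disjoint_left]
      intro j hj1 hj2
      simp only [hCneg, hCzero, hCpos, Finset.mem_union, Finset.mem_filter,
        Finset.mem_univ, true_and] at hj1 hj2
      omega
  · -- support Tneg
    refine suppSum fun j hj => ?_
    simp only [hCneg, Finset.mem_filter, Finset.mem_univ, true_and] at hj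
    have hj1 : SupportedOn (h j) (chainInterval n (a'-(k-1)) b') :=
      suppMono (chainInterval_subset (by omega) (by omega)) (hprops j).1
    have hT1 : SupportedOn T (chainInterval n (a'-(k-1)) b') :=
      suppMono (chainInterval_subset (by omega) le_rfl) hT
    exact suppSub (suppMul hj1 hT1) (suppMul hT1 hj1)
  · -- norm Tneg
    calc ‖∑ j ∈ Cneg, ad (h j) T‖ ≤ ∑ j ∈ Cneg, ‖ad (h j) T‖ := norm_sum_le _ _
      _ ≤ ∑ _j ∈ Cneg, 2 * ‖T‖ :=
          Finset.sum_le_sum fun j _ => norm_ad_le (hprops j).2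
      _ = (Cneg.card : ℝ) * (2 * ‖T‖) := by rw [Finset.sum_const, nsmul_eq_mul]
      _ ≤ ((k-1 : ℕ) : ℝ) * (2 * ‖T‖) := by
          have hc : Cneg.card ≤ a' - (a' - (k-1)) :=
            card_filter_val_le _ (a'-(k-1)) a' (fun j hj => by omega)
          have : Cneg.card ≤ k - 1 := by omega
          have h0 : (0:ℝ) ≤ 2 * ‖T‖ := by positivity
          exact mul_le_mul_of_nonneg_right (by exact_mod_cast this) h0
      _ = 2 * ((k-1 : ℕ) : ℝ) * ‖T‖ := by ring
  · -- support Tzero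
    refine suppSum fun j hj => ?_
    simp only [hCzero, Finset.mem_filter, Finset.mem_univ, true_and] at hj
    have hj1 : SupportedOn (h j) (chainInterval n a' b') :=
      suppMono (chainInterval_subset (by omega) (by omega)) (hprops j).1
    exact suppSub (suppMul hj1 hT) (suppMul hT hj1)
  · -- norm Tzero
    calc ‖∑ j ∈ Czero, ad (h j) T‖ ≤ ∑ j ∈ Czero, ‖ad (h j) T‖ := norm_sum_le _ _
      _ ≤ ∑ _j ∈ Czero, 2 * ‖T‖ :=
          Finset.sum_le_sum fun j _ => norm_ad_le (hprops j).2
      _ = (Czero.card : ℝ) * (2 * ‖T‖) := by rw [Finset.sum_const, nsmul_eq_mul]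
      _ ≤ ((min (b'+2-k) n - a' : ℕ) : ℝ) * (2 * ‖T‖) := by
          have hc : Czero.card ≤ min (b'+2-k) n - a' :=
            card_filter_val_le _ a' (min (b'+2-k) n)
              (fun j hj => ⟨hj.1, by have := j.isLt; omega⟩)
          have h0 : (0:ℝ) ≤ 2 * ‖T‖ := by positivity
          exact mul_le_mul_of_nonneg_right (by exact_mod_cast hc) h0
      _ = 2 * ((min (b'+2-k) n - a' : ℕ) : ℝ) * ‖T‖ := by ring
  · -- support Tpos
    refine suppSum fun j hj => ?_
    simp only [hCpos, Finset.mem_filter, Finset.mem_univ, true_and] at hj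
    have hj1 : SupportedOn (h j) (chainInterval n a' (b'+(k-1))) :=
      suppMono (chainInterval_subset (by omega) (by omega)) (hprops j).1
    have hT1 : SupportedOn T (chainInterval n a' (b'+(k-1))) :=
      suppMono (chainInterval_subset le_rfl (by omega)) hT
    exact suppSub (suppMul hj1 hT1) (suppMul hT1 hj1)
  · -- norm Tpos
    calc ‖∑ j ∈ Cpos, ad (h j) T‖ ≤ ∑ j ∈ Cpos, ‖ad (h j) T‖ := norm_sum_le _ _
      _ ≤ ∑ _j ∈ Cpos, 2 * ‖T‖ :=
          Finset.sum_le_sum fun j _ => norm_ad_le (hprops j).2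
      _ = (Cpos.card : ℝ) * (2 * ‖T‖) := by rw [Finset.sum_const, nsmul_eq_mul]
      _ ≤ ((k-1 : ℕ) : ℝ) * (2 * ‖T‖) := by
          have hc : Cpos.card ≤ (b'+1) - (b'+2-k) :=
            card_filter_val_le _ (b'+2-k) (b'+1) (fun j hj => by omega)
          have : Cpos.card ≤ k - 1 := by omega
          have h0 : (0:ℝ) ≤ 2 * ‖T‖ := by positivity
          exact mul_le_mul_of_nonneg_right (by exact_mod_cast this) h0
      _ = 2 * ((k-1 : ℕ) : ℝ) * ‖T‖ := by ring
end CI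

def negCt {m : ℕ} (π : Fin m → SignType) : ℕ :=
  (Finset.univ.filter fun j => π j = SignType.neg).card
def posCt {m : ℕ} (π : Fin m → SignType) : ℕ :=
  (Finset.univ.filter fun j => π j = SignType.pos).card

lemma negCt_snoc {m : ℕ} (π : Fin m → SignType) (σ : SignType) :
    negCt (Fin.snoc π σ) = negCt π + (if σ = SignType.neg then 1 else 0) := by
  unfold negCt
  rw [Finset.card_filter, Finset.card_filter, Fin.sum_univ_castSucc]
  simp [Fin.snoc_castSucc, Fin.snoc_last]

lemma posCt_snoc {m : ℕ} (π : Fin m → SignType) (σ : SignType) :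
    posCt (Fin.snoc π σ) = posCt π + (if σ = SignType.pos then 1 else 0) := by
  unfold posCt
  rw [Finset.card_filter, Finset.card_filter, Fin.sum_univ_castSucc]
  simp [Fin.snoc_castSucc, Fin.snoc_last]

lemma nzCt_eq {m : ℕ} (π : Fin m → SignType) :
    (Finset.univ.filter fun j => π j ≠ 0).card = negCt π + posCt π := by
  unfold negCt posCt
  rw [Finset.card_filter, Finset.card_filter, Finset.card_filter, ← Finset.sum_add_distrib]
  refine Finset.sum_congr rfl fun j _ => ?_
  cases h : π j <;> simp [h]

lemma Kfac_snoc_castSucc (k l₀ : ℕ) {m : ℕ} (π : Fin m → SignType) (σ : SignType)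
    (s : Fin m) : Kfac k l₀ (Fin.snoc π σ) s.castSucc = Kfac k l₀ π s := by
  unfold Kfac
  rw [Fin.snoc_castSucc]
  congr 2
  rw [Finset.card_filter, Finset.card_filter, Fin.sum_univ_castSucc]
  have hlast : ¬ (Fin.last m < s.castSucc) := by
    simp [Fin.lt_def]
  simp only [hlast, false_and, if_false, add_zero, Fin.snoc_castSucc,
    Fin.castSucc_lt_castSucc_iff]

lemma Kfac_snoc_last (k l₀ : ℕ) {m : ℕ} (π : Fin m → SignType) (σ : SignType) :
    Kfac k l₀ (Fin.snoc π σ) (Fin.last m)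
      = if σ = 0 then l₀ + (k - 1) * (negCt π + posCt π) else k - 1 := by
  unfold Kfac
  rw [Fin.snoc_last]
  congr 1
  rw [← nzCt_eq]
  congr 1
  rw [Finset.card_filter, Finset.card_filter, Fin.sum_univ_castSucc]
  have hlast : ¬ (Fin.last m < Fin.last m) := lt_irrefl _
  simp only [hlast, false_and, if_false, add_zero, Fin.snoc_castSucc,
    Fin.castSucc_lt_last, true_and]

def snocEquiv (m : ℕ) : ((Fin m → SignType) × SignType) ≃ (Fin (m+1) → SignType) where
  toFun p := Fin.snoc p.1 p.2
  invFun π := (Fin.init π, π (Fin.last m))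
  left_inv p := by simp [Fin.init_snoc, Fin.snoc_last]
  right_inv π := Fin.snoc_init_self π

lemma sum_signType {M : Type*} [AddCommMonoid M] (f : SignType → M) :
    ∑ σ : SignType, f σ = f SignType.neg + f SignType.zero + f SignType.pos := by
  rw [show (Finset.univ : Finset SignType)
      = {SignType.neg, SignType.zero, SignType.pos} from by decide]
  rw [Finset.sum_insert (by decide), Finset.sum_insert (by decide), Finset.sum_singleton]
  abel

section Main
variable {n d : ℕ}

lemma main_ind {k : ℕ} (hk : 2 ≤ k) (a b : ℕ) {O : ChainOp n d}
    (hO : SupportedOn O (chainInterval n a b)) :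
    ∀ m (Hs : Fin m → ChainOp n d), (∀ s, IsLocalHam n d k (Hs s)) →
    ∃ T : (Fin m → SignType) → ChainOp n d,
      multiAd Hs O = ∑ π, T π ∧
      ∀ π, SupportedOn (T π)
          (chainInterval n (a - (k-1) * negCt π) (max b (a+k-2) + (k-1) * posCt π)) ∧
        ‖T π‖ ≤ ‖O‖ * ∏ s, ((2 * Kfac k (min (b+1) n - a) π s : ℕ) : ℝ) := by
  intro m
  induction m with
  | zero =>
    intro Hs _
    refine ⟨fun _ => O, ?_, ?_⟩
    · show O = _
      rw [Fintype.sum_unique]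
    · intro π
      constructor
      · have h0 : negCt π = 0 := by simp [negCt]
        have h1 : posCt π = 0 := by simp [posCt]
        rw [h0, h1]
        exact suppMono (chainInterval_subset (by omega) (by omega)) hO
      · simp
  | succ m ih =>
    intro Hs hHs
    obtain ⟨T, hTsum, hTprop⟩ := ih (fun j => Hs j.castSucc) (fun s => hHs s.castSucc)
    have hstep := fun π : Fin m → SignType =>
      step hk (hHs (Fin.last m))
        (a' := a - (k-1) * negCt π) (b' := max b (a+k-2) + (k-1) * posCt π)
        (by
          set e := (k-1) * negCt π
          set p := (k-1) * posCt π
          omega)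
        (hTprop π).1
    choose Tneg Tzero Tpos hdec hneg hzero hpos using hstep
    set l₀ := min (b+1) n - a with hl₀def
    refine ⟨fun π' => if π' (Fin.last m) = SignType.neg then Tneg (Fin.init π')
        else if π' (Fin.last m) = SignType.pos then Tpos (Fin.init π')
        else Tzero (Fin.init π'), ?_, ?_⟩
    · show ad (Hs (Fin.last m)) (multiAd (fun j => Hs j.castSucc) O) = _
      rw [hTsum]
      have hlin : ad (Hs (Fin.last m)) (∑ π, T π)
          = ∑ π, ad (Hs (Fin.last m)) (T π) := by
        unfold ad
        rw [Finset.mul_sum, Finset.sum_mul, ← Finset.sum_sub_distrib]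
      rw [hlin]
      rw [← Equiv.sum_comp (snocEquiv m)
        (fun π' : Fin (m+1) → SignType =>
          if π' (Fin.last m) = SignType.neg then Tneg (Fin.init π')
          else if π' (Fin.last m) = SignType.pos then Tpos (Fin.init π')
          else Tzero (Fin.init π'))]
      rw [Fintype.sum_prod_type]
      refine Finset.sum_congr rfl fun π _ => ?_
      rw [sum_signType (fun σ => _)]
      simp only [snocEquiv, Equiv.coe_fn_mk, Fin.snoc_last, Fin.init_snoc, reduceIte]
      rw [hdec π]
      simp
    · intro π'
      obtain ⟨π, σ, rfl⟩ : ∃ π σ, π' = Fin.snoc π σ :=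
        ⟨Fin.init π', π' (Fin.last m), (Fin.snoc_init_self π').symm⟩
      have hprod : (∏ s : Fin (m+1), ((2 * Kfac k l₀ (Fin.snoc π σ) s : ℕ) : ℝ))
          = (∏ s : Fin m, ((2 * Kfac k l₀ π s : ℕ) : ℝ))
            * ((2 * Kfac k l₀ (Fin.snoc π σ) (Fin.last m) : ℕ) : ℝ) := by
        rw [Fin.prod_univ_castSucc]
        congr 1
        exact Finset.prod_congr rfl fun s _ => by rw [Kfac_snoc_castSucc]
      have hOprev := (hTprop π).2
      cases σ with
      | neg =>
        simp only [Fin.snoc_last, Fin.init_snoc, negCt_snoc, posCt_snoc, reduceIte, add_zero]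
        constructor
        · have heq : a - (k-1) * (negCt π + 1) = a - (k-1) * negCt π - (k-1) := by
            rw [Nat.mul_succ, Nat.sub_sub]
          rw [heq]
          exact (hneg π).1
        · have hK : Kfac k l₀ (Fin.snoc π SignType.neg) (Fin.last m) = k - 1 := by
            rw [Kfac_snoc_last, if_neg (by decide)]
          calc ‖Tneg π‖ ≤ 2 * ((k-1 : ℕ) : ℝ) * ‖T π‖ := (hneg π).2
            _ ≤ 2 * ((k-1 : ℕ) : ℝ)
                * (‖O‖ * ∏ s : Fin m, ((2 * Kfac k l₀ π s : ℕ) : ℝ)) := by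
                exact mul_le_mul_of_nonneg_left hOprev (by positivity)
            _ = ‖O‖ * ∏ s : Fin (m+1),
                ((2 * Kfac k l₀ (Fin.snoc π SignType.neg) s : ℕ) : ℝ) := by
                rw [hprod, hK]
                push_cast
                ring
      | pos =>
        simp only [Fin.snoc_last, Fin.init_snoc, negCt_snoc, posCt_snoc, reduceIte, add_zero]
        constructor
        · have heq : max b (a+k-2) + (k-1) * (posCt π + 1)
              = max b (a+k-2) + (k-1) * posCt π + (k-1) := by
            rw [Nat.mul_succ]
            omega
          rw [heq]
          exact (hpos π).1
        · have hK : Kfac k l₀ (Fin.snoc π SignType.pos) (Fin.last m) = k - 1 := by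
            rw [Kfac_snoc_last, if_neg (by decide)]
          calc ‖Tpos π‖ ≤ 2 * ((k-1 : ℕ) : ℝ) * ‖T π‖ := (hpos π).2
            _ ≤ 2 * ((k-1 : ℕ) : ℝ)
                * (‖O‖ * ∏ s : Fin m, ((2 * Kfac k l₀ π s : ℕ) : ℝ)) := by
                exact mul_le_mul_of_nonneg_left hOprev (by positivity)
            _ = ‖O‖ * ∏ s : Fin (m+1),
                ((2 * Kfac k l₀ (Fin.snoc π SignType.pos) s : ℕ) : ℝ) := by
                rw [hprod, hK]
                push_cast
                ring
      | zero =>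
        simp only [Fin.snoc_last, Fin.init_snoc, negCt_snoc, posCt_snoc, reduceIte, add_zero]
        constructor
        · exact (hzero π).1
        · have hK : Kfac k l₀ (Fin.snoc π SignType.zero) (Fin.last m)
              = l₀ + (k - 1) * (negCt π + posCt π) := by
            rw [Kfac_snoc_last, if_pos (by decide)]
          have hbound : min (max b (a+k-2) + (k-1) * posCt π + 2 - k) n
                - (a - (k-1) * negCt π)
              ≤ l₀ + (k - 1) * (negCt π + posCt π) := by
            rw [Nat.mul_add, hl₀def]
            set e := (k-1) * negCt π
            set p := (k-1) * posCt π
            omega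
          calc ‖Tzero π‖
              ≤ 2 * ((min (max b (a+k-2) + (k-1) * posCt π + 2 - k) n
                  - (a - (k-1) * negCt π) : ℕ) : ℝ) * ‖T π‖ := (hzero π).2
            _ ≤ 2 * ((l₀ + (k - 1) * (negCt π + posCt π) : ℕ) : ℝ) * ‖T π‖ := by
                refine mul_le_mul_of_nonneg_right ?_ (norm_nonneg _)
                have h2 : ((min (max b (a+k-2) + (k-1) * posCt π + 2 - k) n
                    - (a - (k-1) * negCt π) : ℕ) : ℝ)
                    ≤ ((l₀ + (k - 1) * (negCt π + posCt π) : ℕ) : ℝ) := by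
                  exact_mod_cast hbound
                linarith
            _ ≤ 2 * ((l₀ + (k - 1) * (negCt π + posCt π) : ℕ) : ℝ)
                * (‖O‖ * ∏ s : Fin m, ((2 * Kfac k l₀ π s : ℕ) : ℝ)) := by
                exact mul_le_mul_of_nonneg_left hOprev (by positivity)
            _ = ‖O‖ * ∏ s : Fin (m+1),
                ((2 * Kfac k l₀ (Fin.snoc π SignType.zero) s : ℕ) : ℝ) := by
                rw [hprod, hK]
                push_cast
                ring

end Main

/-- Lemma 3 of the paper: the norm of the iterated commutator of one-dimensional `k`-local
Hamiltonians with unit-norm terms, applied to an operator `O` supported on an interval of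
`l₀` sites, is bounded by `‖O‖ · Σ_{π ∈ {−1,0,+1}^m} Π_{s=1}^m 2·K_s(π)`. -/
theorem multi_commutator_norm_bound
    (n d k : ℕ) (hn : 1 ≤ n) (hd : 2 ≤ d) (hk : 2 ≤ k)
    (m : ℕ) (Hs : Fin m → ChainOp n d) (hHs : ∀ s : Fin m, IsLocalHam n d k (Hs s))
    (a b l₀ : ℕ) (O : ChainOp n d)
    (hO : SupportedOn O (chainInterval n a b))
    (hl₀ : (chainInterval n a b).card = l₀) :
    ‖multiAd Hs O‖ ≤
      ‖O‖ * ∑ π : Fin m → SignType, ∏ s : Fin m, ((2 * Kfac k l₀ π s : ℕ) : ℝ) := by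
  have hl₀' : l₀ = min (b+1) n - a := by rw [← hl₀, chainInterval_card]
  subst hl₀'
  obtain ⟨T, hsum, hprop⟩ := main_ind hk a b hO m Hs hHs
  rw [hsum, Finset.mul_sum]
  calc ‖∑ π, T π‖ ≤ ∑ π, ‖T π‖ := norm_sum_le _ _
    _ ≤ ∑ π : Fin m → SignType,
        ‖O‖ * ∏ s : Fin m, ((2 * Kfac k (min (b+1) n - a) π s : ℕ) : ℝ) :=
        Finset.sum_le_sum fun π _ => (hprop π).2
end

section
/- Fix integers m ≥ 1, k ≥ 2, l₀ ≥ 1 and an integer q with 0 ≤ q ≤ m. Define, for π ∈ {−1,0,+1}^m, K_s(π) := k − 1 if π_s ≠ 0 and K_s(π) := l₀ + (k−1)·#{ j < s : π_j ≠ 0 } if π_s = 0. Then the partial sum N_{m,q} := Σ_{π : exactly q entries of π are nonzero} Π_{s=1}^m 2·K_s(π) satisfies N_{m,q} ≤ C(m,q) · 2^{m+q} · k^m · (q + l₀/k)^{m−q}, where C(m,q) is the binomial coefficient. -/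
/-- Counting lemma: there are at most `C(m,q)·2^q` sign patterns with exactly `q` nonzero
entries. -/
lemma card_patterns_le (m q : ℕ) :
    (Finset.univ.filter
        (fun π : Fin m → SignType => (Finset.univ.filter fun s => π s ≠ 0).card = q)).card ≤
      m.choose q * 2 ^ q := by
  classical
  have h := Finset.card_le_card_of_injOn
    (f := fun π : Fin m → SignType =>
      (⟨Finset.univ.filter fun s => π s ≠ 0, Finset.univ.filter fun s => π s = 1⟩ :
        Σ _ : Finset (Fin m), Finset (Fin m)))
    (s := Finset.univ.filter
        (fun π : Fin m → SignType => (Finset.univ.filter fun s => π s ≠ 0).card = q))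
    (t := (Finset.powersetCard q (Finset.univ : Finset (Fin m))).sigma fun S => S.powerset)
    (by
      intro π hπ
      simp only [Finset.coe_filter, Finset.mem_coe, Finset.mem_filter, Set.mem_setOf_eq] at hπ
      simp only [Finset.mem_coe, Finset.mem_sigma, Finset.mem_powersetCard, Finset.mem_powerset]
      refine ⟨⟨Finset.subset_univ _, hπ.2⟩, ?_⟩
      intro s hs
      simp only [Finset.mem_filter] at hs ⊢
      exact ⟨hs.1, by simp [hs.2]⟩)
    (by
      intro π hπ π' hπ' hee
      have h1 : (Finset.univ.filter fun s => π s ≠ 0) =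
          (Finset.univ.filter fun s => π' s ≠ 0) := congrArg Sigma.fst hee
      have h2 : (Finset.univ.filter fun s => π s = 1) =
          (Finset.univ.filter fun s => π' s = 1) := by
        have := (Sigma.mk.inj_iff.mp hee).2
        exact eq_of_heq this
      funext s
      have e1 : (π s ≠ 0) ↔ (π' s ≠ 0) := by
        constructor <;> intro h
        · have : s ∈ Finset.univ.filter fun s => π' s ≠ 0 := h1 ▸ (by simp [h])
          simpa using this
        · have : s ∈ Finset.univ.filter fun s => π s ≠ 0 := by
            rw [h1]; simp [h]
          simpa using this
      have e2 : (π s = 1) ↔ (π' s = 1) := by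
        constructor <;> intro h
        · have : s ∈ Finset.univ.filter fun s => π' s = 1 := h2 ▸ (by simp [h])
          simpa using this
        · have : s ∈ Finset.univ.filter fun s => π s = 1 := by
            rw [h2]; simp [h]
          simpa using this
      cases hps : π s <;> cases hps' : π' s <;> simp_all)
  refine h.trans ?_
  rw [Finset.card_sigma]
  have : ∀ S ∈ Finset.powersetCard q (Finset.univ : Finset (Fin m)),
      S.powerset.card = 2 ^ q := by
    intro S hS
    rw [Finset.card_powerset, (Finset.mem_powersetCard.mp hS).2]
  rw [Finset.sum_congr rfl this, Finset.sum_const, Finset.card_powersetCard,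
    Finset.card_univ, Fintype.card_fin, smul_eq_mul]

/-- Per-pattern bound in `ℕ`. -/
lemma prod_Kfac_le (m k l₀ q : ℕ) (π : Fin m → SignType)
    (hπ : (Finset.univ.filter fun s => π s ≠ 0).card = q) :
    (∏ s : Fin m, 2 * Kfac k l₀ π s) ≤ (2 * (k * q + l₀)) ^ (m - q) * (2 * k) ^ q := by
  classical
  have hpt : ∀ s ∈ (Finset.univ : Finset (Fin m)), 2 * Kfac k l₀ π s ≤
      (if π s = 0 then 2 * (k * q + l₀) else 2 * k) := by
    intro s _
    by_cases h : π s = 0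
    · simp only [Kfac, h, if_true]
      have hc : (Finset.univ.filter fun j : Fin m => j < s ∧ π j ≠ 0).card ≤ q := by
        rw [← hπ]
        apply Finset.card_le_card
        intro j hj
        simp only [Finset.mem_filter] at hj ⊢
        exact ⟨hj.1, hj.2.2⟩
      have h1 : (k - 1) * (Finset.univ.filter fun j : Fin m => j < s ∧ π j ≠ 0).card ≤
          (k - 1) * q := Nat.mul_le_mul_left _ hc
      have h2 : (k - 1) * q ≤ k * q := Nat.mul_le_mul_right q (Nat.sub_le k 1)
      omega
    · simp only [Kfac, h, if_false]
      omega
  calc (∏ s : Fin m, 2 * Kfac k l₀ π s)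
      ≤ ∏ s : Fin m, (if π s = 0 then 2 * (k * q + l₀) else 2 * k) :=
        Finset.prod_le_prod' hpt
    _ = (2 * (k * q + l₀)) ^ (m - q) * (2 * k) ^ q := by
        rw [Finset.prod_ite, Finset.prod_const, Finset.prod_const]
        have hsum := Finset.card_filter_add_card_filter_not
          (s := (Finset.univ : Finset (Fin m))) (p := fun s => π s = 0)
        have hq' : (Finset.univ.filter fun s => ¬ π s = 0).card = q := hπ
        rw [Finset.card_univ, Fintype.card_fin] at hsum
        rw [hq']
        congr 1
        congr 1
        omega

/-- The combinatorial bound on the partial sum `N_{m,q}` of the multi-commutator expansion: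
summing `Π_{s=1}^m 2·K_s(π)` over sign patterns `π ∈ {−1,0,+1}^m` with exactly `q` nonzero
entries gives at most `C(m,q)·2^{m+q}·k^m·(q + l₀/k)^{m−q}`. -/
theorem Nmq_bound (m k l₀ q : ℕ) (hm : 1 ≤ m) (hk : 2 ≤ k) (hl₀ : 1 ≤ l₀) (hq : q ≤ m) :
    ((∑ π ∈ Finset.univ.filter
          (fun π : Fin m → SignType => (Finset.univ.filter fun s => π s ≠ 0).card = q),
        ∏ s : Fin m, 2 * Kfac k l₀ π s : ℕ) : ℝ) ≤
      (m.choose q : ℝ) * 2 ^ (m + q) * (k : ℝ) ^ m *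
        ((q : ℝ) + (l₀ : ℝ) / (k : ℝ)) ^ (m - q) := by
  classical
  have hnat : (∑ π ∈ Finset.univ.filter
          (fun π : Fin m → SignType => (Finset.univ.filter fun s => π s ≠ 0).card = q),
        ∏ s : Fin m, 2 * Kfac k l₀ π s) ≤
      (m.choose q * 2 ^ q) * ((2 * (k * q + l₀)) ^ (m - q) * (2 * k) ^ q) := by
    calc (∑ π ∈ Finset.univ.filter
          (fun π : Fin m → SignType => (Finset.univ.filter fun s => π s ≠ 0).card = q),
        ∏ s : Fin m, 2 * Kfac k l₀ π s)
        ≤ (Finset.univ.filter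
            (fun π : Fin m → SignType =>
              (Finset.univ.filter fun s => π s ≠ 0).card = q)).card •
            ((2 * (k * q + l₀)) ^ (m - q) * (2 * k) ^ q) := by
          apply Finset.sum_le_card_nsmul
          intro π hπ
          exact prod_Kfac_le m k l₀ q π (Finset.mem_filter.mp hπ).2
      _ ≤ (m.choose q * 2 ^ q) * ((2 * (k * q + l₀)) ^ (m - q) * (2 * k) ^ q) := by
          rw [smul_eq_mul]
          exact Nat.mul_le_mul_right _ (card_patterns_le m q)
  have hk0 : (0:ℝ) < (k:ℝ) := by positivity
  have hkX : ((2 * (k * q + l₀) : ℕ) : ℝ) =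
      2 * (k:ℝ) * ((q:ℝ) + (l₀:ℝ) / (k:ℝ)) := by
    field_simp
    push_cast
    ring
  calc ((∑ π ∈ Finset.univ.filter
          (fun π : Fin m → SignType => (Finset.univ.filter fun s => π s ≠ 0).card = q),
        ∏ s : Fin m, 2 * Kfac k l₀ π s : ℕ) : ℝ)
      ≤ (((m.choose q * 2 ^ q) * ((2 * (k * q + l₀)) ^ (m - q) * (2 * k) ^ q) : ℕ) : ℝ) := by
        exact_mod_cast hnat
    _ = (m.choose q : ℝ) * 2 ^ (m + q) * (k : ℝ) ^ m *
        ((q : ℝ) + (l₀ : ℝ) / (k : ℝ)) ^ (m - q) := by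
        have hr : (2:ℝ) * ((k:ℝ) * (q:ℝ) + (l₀:ℝ)) =
            2 * (k:ℝ) * ((q:ℝ) + (l₀:ℝ) / (k:ℝ)) := by
          field_simp
        have ha : q + (m - q) + q = m + q := by
          rw [Nat.add_sub_cancel' hq]
        have hb : m - q + q = m := Nat.sub_add_cancel hq
        have e2 : (2:ℝ) ^ q * (2:ℝ) ^ (m - q) * (2:ℝ) ^ q = 2 ^ (m + q) := by
          rw [← pow_add, ← pow_add, ha]
        have ek : (k:ℝ) ^ (m - q) * (k:ℝ) ^ q = (k:ℝ) ^ m := by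
          rw [← pow_add, hb]
        push_cast
        rw [hr, mul_pow, mul_pow, mul_pow, ← e2, ← ek]
        ring
end

section
/- Let a > 0 be a real number and let q, m be integers with 0 ≤ q ≤ m and m ≥ 1. Let w > 0 be the unique positive real satisfying w·e^w = e·(m + a). Then (q + a)^{m − q} ≤ ((m+a)/w)^{(m+a) − (m+a)/w}. -/
/-- The maximization step of the paper: for `a > 0`, integers `0 ≤ q ≤ m` with `m ≥ 1`, and
`w > 0` the value of the Lambert W function at `e·(m+a)` (characterized by `w·e^w = e·(m+a)`),
one has `(q+a)^{m−q} ≤ ((m+a)/w)^{(m+a) − (m+a)/w}`. -/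
theorem maximization_lambertW (a : ℝ) (ha : 0 < a) (q m : ℕ) (hq : q ≤ m) (hm : 1 ≤ m)
    (w : ℝ) (hw : 0 < w) (hwe : w * Real.exp w = Real.exp 1 * ((m : ℝ) + a)) :
    ((q : ℝ) + a) ^ ((m : ℝ) - (q : ℝ)) ≤
      (((m : ℝ) + a) / w) ^ (((m : ℝ) + a) - ((m : ℝ) + a) / w) := by
  set M : ℝ := (m : ℝ) + a with hMdef
  set x : ℝ := (q : ℝ) + a with hxdef
  have hqm : (q : ℝ) ≤ (m : ℝ) := by exact_mod_cast hq
  have hm1 : (1 : ℝ) ≤ (m : ℝ) := by exact_mod_cast hm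
  have hx : 0 < x := by positivity
  have hM : 0 < M := by positivity
  have hxM : x ≤ M := by simp only [hMdef, hxdef]; linarith
  have hM1 : 1 < M := by simp only [hMdef]; linarith
  -- w > 1
  have hw1 : 1 < w := by
    by_contra h
    push_neg at h
    have h1 : Real.exp w ≤ Real.exp 1 := Real.exp_le_exp.mpr h
    have h2 : w * Real.exp w ≤ 1 * Real.exp 1 := by
      apply mul_le_mul h ((Real.exp_le_exp.mpr h)) (Real.exp_pos w).le zero_le_one
    have h3 : Real.exp 1 * 1 < Real.exp 1 * M :=
      mul_lt_mul_of_pos_left hM1 (Real.exp_pos 1)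
    nlinarith [Real.exp_pos 1]
  set s : ℝ := M / w with hsdef
  have hs_pos : 0 < s := div_pos hM hw
  have hs : s = Real.exp (w - 1) := by
    rw [hsdef, Real.exp_sub]
    rw [div_eq_div_iff hw.ne' (Real.exp_pos 1).ne']
    linarith [hwe]
  have hlogs : Real.log s = w - 1 := by rw [hs, Real.log_exp]
  have hMws : M = w * s := by
    rw [hsdef, mul_div_assoc', eq_div_iff hw.ne', mul_comm]
  -- key tangent-line bound
  have key : Real.log x ≤ w - 2 + x / s := by
    have h1 : Real.log (x / s) ≤ x / s - 1 := Real.log_le_sub_one_of_pos (by positivity)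
    rw [Real.log_div (ne_of_gt hx) (ne_of_gt hs_pos), hlogs] at h1
    linarith
  -- reduce to logarithms
  have hgoal : Real.log x * (M - x) ≤ Real.log s * (M - s) := by
    have hMx : 0 ≤ M - x := by linarith
    have h2 : Real.log x * (M - x) ≤ (w - 2 + x / s) * (M - x) :=
      mul_le_mul_of_nonneg_right key hMx
    have hxs : x / s * s = x := div_mul_cancel₀ x (ne_of_gt hs_pos)
    have h4 : (w - 2 + x / s) * (M - x) ≤ (w - 1) * (M - s) := by
      have hid : (w - 1) * (M - s) - (w - 2 + x / s) * (M - x) = s * (x / s - 1) ^ 2 := by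
        rw [hMws]
        field_simp
        ring
      nlinarith [mul_nonneg hs_pos.le (sq_nonneg (x / s - 1))]
    rw [hlogs]
    exact le_trans h2 h4
  have hMQ : (m : ℝ) - (q : ℝ) = M - x := by simp only [hMdef, hxdef]; ring
  rw [hMQ, Real.rpow_def_of_pos hx, Real.rpow_def_of_pos hs_pos, Real.exp_le_exp]
  exact hgoal
end

section
/- Let H and H∂ be complex square matrices of the same size and let β be a real number. Then for every real s, the map s ↦ exp(−β(H − s·H∂)) has derivative at s equal to ∫₀¹ exp(−β(1−κ)(H − s·H∂)) · (β·H∂) · exp(−β·κ·(H − s·H∂)) dκ (Duhamel's formula for the derivative of the matrix exponential). -/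
open scoped Matrix.Norms.L2Operator

open NormedSpace intervalIntegral

section aux

variable {𝔸 : Type*} [NormedRing 𝔸] [NormedAlgebra ℝ 𝔸] [CompleteSpace 𝔸]

/-- Difference of exponentials as an integral. -/
lemma exp_sub_exp_eq_integral (X Y : 𝔸) :
    exp Y - exp X =
      ∫ κ in (0:ℝ)..1, exp ((1 - κ) • X) * (Y - X) * exp (κ • Y) := by
  have hderiv : ∀ κ : ℝ,
      HasDerivAt (fun κ : ℝ => exp ((1 - κ) • X) * exp (κ • Y))
        (exp ((1 - κ) • X) * (Y - X) * exp (κ • Y)) κ := by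
    intro κ
    have hu : HasDerivAt (fun κ : ℝ => 1 - κ) (-1) κ := by
      simpa using (hasDerivAt_id κ).const_sub (1:ℝ)
    have h1 : HasDerivAt (fun κ : ℝ => exp ((1 - κ) • X))
        ((-1 : ℝ) • (exp ((1 - κ) • X) * X)) κ :=
      (hasDerivAt_exp_smul_const X (1 - κ)).scomp κ hu
    have h2 : HasDerivAt (fun κ : ℝ => exp (κ • Y)) (Y * exp (κ • Y)) κ :=
      hasDerivAt_exp_smul_const' Y κ
    have := h1.mul h2
    convert this using 1
    · rfl
    simp only [neg_one_smul]
    noncomm_ring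
  have hcont : Continuous fun κ : ℝ =>
      exp ((1 - κ) • X) * (Y - X) * exp (κ • Y) := by
    apply Continuous.mul
    · apply Continuous.mul
      · exact (continuous_iff_continuousAt.2 fun x => (exp_analytic (𝕂 := ℝ) x).continuousAt).comp ((continuous_const.sub continuous_id).smul continuous_const)
      · exact continuous_const
    · exact (continuous_iff_continuousAt.2 fun x => (exp_analytic (𝕂 := ℝ) x).continuousAt).comp (continuous_id.smul continuous_const)
  have := intervalIntegral.integral_eq_sub_of_hasDerivAt
    (f := fun κ : ℝ => exp ((1 - κ) • X) * exp (κ • Y))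
    (fun κ _ => hderiv κ) (hcont.intervalIntegrable 0 1)
  rw [this]
  simp [NormedSpace.exp_zero]

end aux

/-- Duhamel's formula (Eq. (15) of the paper): the derivative of
`s ↦ exp(−β(H − s·H∂))` is
`∫₀¹ exp(−β(1−κ)(H − s·H∂))·(β·H∂)·exp(−βκ(H − s·H∂)) dκ`. -/
theorem duhamel_formula {N : ℕ} (H Hpart : Matrix (Fin N) (Fin N) ℂ) (β : ℝ) (s : ℝ) :
    HasDerivAt
      (fun s : ℝ => NormedSpace.exp ((-(β : ℂ)) • (H - (s : ℂ) • Hpart)))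
      (∫ κ in (0 : ℝ)..1,
        NormedSpace.exp ((-(β : ℂ) * (1 - (κ : ℂ))) • (H - (s : ℂ) • Hpart)) *
          ((β : ℂ) • Hpart) *
          NormedSpace.exp ((-(β : ℂ) * (κ : ℂ)) • (H - (s : ℂ) • Hpart)))
      s := by
  set M : ℝ → Matrix (Fin N) (Fin N) ℂ :=
    fun t => (-(β : ℂ)) • (H - (t : ℂ) • Hpart) with hM
  set B : Matrix (Fin N) (Fin N) ℂ := (β : ℂ) • Hpart with hB
  have hMsub : ∀ t u : ℝ, M u - M t = (u - t) • B := by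
    intro t u
    ext i j
    simp only [hM, hB, Matrix.sub_apply, Matrix.smul_apply, Matrix.sub_apply,
      Matrix.smul_apply, smul_eq_mul, Complex.real_smul]
    push_cast
    ring
  have hMcont : Continuous M := by
    refine Continuous.const_smul (g := fun t : ℝ => H - (t : ℂ) • Hpart) ?_ (-(β : ℂ))
    exact continuous_const.sub ((Complex.continuous_ofReal).smul continuous_const)
  set g : ℝ → Matrix (Fin N) (Fin N) ℂ :=
    fun t => ∫ κ in (0:ℝ)..1, exp ((1 - κ) • M t) * B * exp (κ • M s) with hg
  -- key identity: f t - f s = (t - s) • g t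
  have key : ∀ t : ℝ, exp (M t) - exp (M s) = (t - s) • g t := by
    intro t
    have := exp_sub_exp_eq_integral (M t) (M s)
    -- this : exp (M s) - exp (M t) = ∫ exp ((1-κ)•M t) * (M s - M t) * exp (κ • M s)
    rw [hMsub t s] at this
    simp only [mul_smul_comm, smul_mul_assoc, intervalIntegral.integral_smul] at this
    have h2 := congrArg Neg.neg this
    rw [neg_sub, ← neg_smul, neg_sub] at h2
    exact h2
  -- continuity of g
  have hgcont : Continuous g := by
    apply continuous_parametric_intervalIntegral_of_continuous'
    apply Continuous.mul
    · apply Continuous.mul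
      · exact (continuous_iff_continuousAt.2 fun x => (exp_analytic (𝕂 := ℝ) x).continuousAt).comp
          (((continuous_const.sub continuous_snd)).smul (hMcont.comp continuous_fst))
      · exact continuous_const
    · exact (continuous_iff_continuousAt.2 fun x => (exp_analytic (𝕂 := ℝ) x).continuousAt).comp (continuous_snd.smul continuous_const)
  have htend : Filter.Tendsto g (nhdsWithin s {s}ᶜ) (nhds (g s)) :=
    (hgcont.tendsto s).mono_left nhdsWithin_le_nhds
  have hd : HasDerivAt (fun t : ℝ => exp (M t)) (g s) s := by
    rw [hasDerivAt_iff_tendsto_slope]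
    apply htend.congr'
    filter_upwards [self_mem_nhdsWithin] with t ht
    have hts : t - s ≠ 0 := sub_ne_zero.mpr ht
    rw [slope_def_module, key t, smul_smul, inv_mul_cancel₀ hts, one_smul]
  -- now convert exp to exp and match integrands
  have hexp : (exp : Matrix (Fin N) (Fin N) ℂ → _) = exp := rfl
  have hfun : (fun t : ℝ => exp (M t))
      = fun t : ℝ => NormedSpace.exp ((-(β : ℂ)) • (H - (t : ℂ) • Hpart)) := by
    funext t; rw [hexp]
  have hgs : g s = ∫ κ in (0 : ℝ)..1,
      NormedSpace.exp ((-(β : ℂ) * (1 - (κ : ℂ))) • (H - (s : ℂ) • Hpart)) *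
        ((β : ℂ) • Hpart) *
        NormedSpace.exp ((-(β : ℂ) * (κ : ℂ)) • (H - (s : ℂ) • Hpart)) := by
    rw [hg]
    refine intervalIntegral.integral_congr fun κ _ => ?_
    have e1 : ((1 - κ : ℝ)) • M s = ((-(β:ℂ)) * (1 - (κ:ℂ))) • (H - (s:ℂ) • Hpart) := by
      rw [hM, ← Complex.coe_smul, smul_smul]
      congr 1
      push_cast
      ring
    have e2 : (κ : ℝ) • M s = ((-(β:ℂ)) * (κ:ℂ)) • (H - (s:ℂ) • Hpart) := by
      rw [hM, ← Complex.coe_smul, smul_smul]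
      congr 1
      ring
    rw [hexp, e1, e2, hB]
  rw [hfun, hgs] at hd
  exact hd
end

section
/- Let H and H∂ be Hermitian complex matrices of the same size, let O be any complex matrix of that size, and let β be real. For s ∈ [0,1] set H(s) := H − s·H∂, Z(s) := tr exp(−β·H(s)) (a positive real), and ρ(s) := exp(−β·H(s))/Z(s). Then tr(ρ(1)·O) − tr(ρ(0)·O) = β·∫₀¹∫₀¹ [ tr(exp(−β(1−κ)H(s))·H∂·exp(−βκH(s))·O)/Z(s) − tr(ρ(s)·O)·tr(ρ(s)·H∂) ] dκ ds (the truncation formula, Eq. (12) of the paper in integrated form). -/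
open scoped Matrix.Norms.L2Operator

/-- `exp(−t·(H − s·H∂))`, the Gibbs-type exponential of the interpolated Hamiltonian
`H(s) = H − s·H∂` at (inverse-temperature-like) parameter `t`. -/
noncomputable def expH {N : ℕ} (H Hpart : Matrix (Fin N) (Fin N) ℂ) (s t : ℝ) :
    Matrix (Fin N) (Fin N) ℂ :=
  NormedSpace.exp ((-(t : ℂ)) • (H - (s : ℂ) • Hpart))

/-- The Gibbs state `ρ(s) := exp(−βH(s))/Z(s)` for `H(s) = H − s·H∂`,
`Z(s) = tr exp(−βH(s))`. -/
noncomputable def gibbsState {N : ℕ} (H Hpart : Matrix (Fin N) (Fin N) ℂ) (β s : ℝ) :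
    Matrix (Fin N) (Fin N) ℂ :=
  ((expH H Hpart s β).trace)⁻¹ • expH H Hpart s β

noncomputable instance TF.instNormedAlgebraRat {N : ℕ} : NormedAlgebra ℚ (Matrix (Fin N) (Fin N) ℂ) :=
  { (inferInstance : Algebra ℚ (Matrix (Fin N) (Fin N) ℂ)) with
    norm_smul_le := fun q A => by
      rw [← algebraMap_smul ℂ q A, norm_smul]
      simp [← Rat.norm_cast_real] }

section Aux

open NormedSpace Matrix intervalIntegral MeasureTheory Filter

set_option maxHeartbeats 1000000

variable {N : ℕ}

lemma TF.comp_ofReal {E} [NormedAddCommGroup E] [NormedSpace ℂ E] {f : ℂ → E} {f' : E} {x : ℝ}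
    (hf : HasDerivAt f f' (x:ℂ)) : HasDerivAt (fun y : ℝ => f y) f' x := by
  simpa [Function.comp_def] using hf.scomp x Complex.ofRealCLM.hasDerivAt

/-- The trace as a continuous linear map. -/
noncomputable def TF.trCLM (N : ℕ) : Matrix (Fin N) (Fin N) ℂ →L[ℂ] ℂ :=
  LinearMap.toContinuousLinearMap (Matrix.traceLinearMap (Fin N) ℂ ℂ)

/-- `X ↦ (X * O).trace` as a continuous linear map. -/
noncomputable def TF.trO (N : ℕ) (O : Matrix (Fin N) (Fin N) ℂ) :
    Matrix (Fin N) (Fin N) ℂ →L[ℂ] ℂ :=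
  (TF.trCLM N).comp (LinearMap.toContinuousLinearMap (LinearMap.mulRight ℂ O))

@[simp] lemma TF.trCLM_apply (X : Matrix (Fin N) (Fin N) ℂ) : TF.trCLM N X = X.trace := rfl

@[simp] lemma TF.trO_apply (O X : Matrix (Fin N) (Fin N) ℂ) :
    TF.trO N O X = (X * O).trace := rfl

lemma TF.duhamel (X Y : Matrix (Fin N) (Fin N) ℂ) :
    exp X - exp Y =
      ∫ κ in (0:ℝ)..1, exp ((κ:ℂ) • X) * (X - Y) * exp (((1-κ:ℝ):ℂ) • Y) := by
  have hg : ∀ κ : ℝ, HasDerivAt (fun u : ℝ => exp ((u:ℂ) • X) * exp (((1-u:ℝ):ℂ) • Y))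
      (exp ((κ:ℂ) • X) * (X - Y) * exp (((1-κ:ℝ):ℂ) • Y)) κ := by
    intro κ
    have h1 : HasDerivAt (fun u : ℝ => exp ((u:ℂ) • X)) (exp ((κ:ℂ) • X) * X) κ :=
      TF.comp_ofReal (hasDerivAt_exp_smul_const X (κ:ℂ))
    have h2c : HasDerivAt (fun u : ℝ => exp ((u:ℂ) • Y)) (Y * exp (((1-κ:ℝ):ℂ) • Y)) (1-κ) :=
      TF.comp_ofReal (hasDerivAt_exp_smul_const' Y ((1-κ:ℝ):ℂ))
    have hinner : HasDerivAt (fun u : ℝ => (1:ℝ) - u) (-1) κ := by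
      simpa using (hasDerivAt_id κ).const_sub 1
    have h2 : HasDerivAt (fun u : ℝ => exp (((1-u:ℝ):ℂ) • Y))
        ((-1 : ℝ) • (Y * exp (((1-κ:ℝ):ℂ) • Y))) κ := h2c.scomp κ hinner
    have := h1.mul h2
    refine this.congr_deriv ?_
    rw [← smul_one_smul ℂ (-1 : ℝ) (Y * exp (((1-κ:ℝ):ℂ) • Y))]
    push_cast
    simp only [neg_smul, one_smul, mul_neg, sub_mul, mul_sub]
    ring_nf
    noncomm_ring
  have hcont : Continuous fun κ : ℝ => exp ((κ:ℂ) • X) * (X - Y) * exp (((1-κ:ℝ):ℂ) • Y) := by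
    apply Continuous.mul
    apply Continuous.mul
    · exact exp_continuous.comp ((Complex.continuous_ofReal).smul continuous_const)
    · exact continuous_const
    · exact exp_continuous.comp
        ((Complex.continuous_ofReal.comp (continuous_const.sub continuous_id)).smul continuous_const)
  have := intervalIntegral.integral_eq_sub_of_hasDerivAt
    (f := fun u : ℝ => exp ((u:ℂ) • X) * exp (((1-u:ℝ):ℂ) • Y))
    (fun κ _ => hg κ) (hcont.intervalIntegrable 0 1)
  rw [this]
  norm_num [exp_zero]

lemma TF.cont_aux (G : ℝ → Matrix (Fin N) (Fin N) ℂ) (hG : Continuous G)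
    (C : ℝ → Matrix (Fin N) (Fin N) ℂ) (hC : Continuous C) (B : Matrix (Fin N) (Fin N) ℂ) :
    Continuous (Function.uncurry fun (y : ℝ) (κ : ℝ) =>
      exp ((κ:ℂ) • G y) * B * exp (((1-κ:ℝ):ℂ) • C y)) := by
  apply Continuous.mul
  apply Continuous.mul
  · exact exp_continuous.comp
      ((Complex.continuous_ofReal.comp continuous_snd).smul (hG.comp continuous_fst))
  · exact continuous_const
  · exact exp_continuous.comp
      ((Complex.continuous_ofReal.comp (continuous_const.sub continuous_snd)).smul
        (hC.comp continuous_fst))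

lemma TF.contκ (K X : Matrix (Fin N) (Fin N) ℂ) :
    Continuous fun κ : ℝ => exp ((κ:ℂ) • K) * X * exp (((1-κ:ℝ):ℂ) • K) := by
  apply Continuous.mul
  apply Continuous.mul
  · exact exp_continuous.comp (Complex.continuous_ofReal.smul continuous_const)
  · exact continuous_const
  · exact exp_continuous.comp
      ((Complex.continuous_ofReal.comp (continuous_const.sub continuous_id)).smul continuous_const)

lemma TF.contκ' (K X Y : Matrix (Fin N) (Fin N) ℂ) :
    Continuous fun κ : ℝ => exp (((1-κ:ℝ):ℂ) • K) * X * exp ((κ:ℂ) • K) * Y := by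
  apply Continuous.mul _ continuous_const
  apply Continuous.mul
  apply Continuous.mul
  · exact exp_continuous.comp
      ((Complex.continuous_ofReal.comp (continuous_const.sub continuous_id)).smul continuous_const)
  · exact continuous_const
  · exact exp_continuous.comp (Complex.continuous_ofReal.smul continuous_const)

lemma TF.hasDerivAt_exp_affine (A₀ B : Matrix (Fin N) (Fin N) ℂ) (s : ℝ) :
    HasDerivAt (fun u : ℝ => exp (A₀ + u • B))
      (∫ κ in (0:ℝ)..1,
        exp ((κ:ℂ) • (A₀ + s • B)) * B * exp (((1-κ:ℝ):ℂ) • (A₀ + s • B))) s := by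
  set f : ℝ → Matrix (Fin N) (Fin N) ℂ := fun u => exp (A₀ + u • B) with hf
  set Φ : ℝ → Matrix (Fin N) (Fin N) ℂ := fun y =>
    ∫ κ in (0:ℝ)..1, exp ((κ:ℂ) • (A₀ + y • B)) * B * exp (((1-κ:ℝ):ℂ) • (A₀ + s • B))
    with hΦ
  have hΦcont : Continuous Φ := by
    apply continuous_parametric_intervalIntegral_of_continuous'
    exact TF.cont_aux (fun y => A₀ + y • B) (by fun_prop) (fun _ => A₀ + s • B) continuous_const B
  have hslope : ∀ y : ℝ, y ≠ s → Φ y = slope f s y := by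
    intro y hy
    have hdh := TF.duhamel (A₀ + y • B) (A₀ + s • B)
    have hdiff : (A₀ + y • B) - (A₀ + s • B) = (y - s) • B := by
      rw [add_sub_add_left_eq_sub, ← sub_smul]
    rw [hdiff] at hdh
    have : f y - f s = (y - s) • Φ y := by
      rw [hf]; simp only []
      rw [hdh, hΦ, ← intervalIntegral.integral_smul]
      congr 1; ext κ
      rw [mul_smul_comm, smul_mul_assoc]
    rw [slope_def_module, this, smul_smul, inv_mul_cancel₀ (sub_ne_zero.mpr hy), one_smul]
  rw [hasDerivAt_iff_tendsto_slope]
  have : Tendsto Φ (nhdsWithin s {s}ᶜ) (nhds (Φ s)) :=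
    (hΦcont.tendsto s).mono_left nhdsWithin_le_nhds
  exact this.congr' (eventually_nhdsWithin_of_forall fun y hy => hslope y hy)

lemma TF.trace_exp_ne_zero (hN : N ≠ 0) (K : Matrix (Fin N) (Fin N) ℂ) (hK : K.IsHermitian) :
    (exp K).trace ≠ 0 := by
  have : NeZero N := ⟨hN⟩
  set P := exp ((2⁻¹ : ℂ) • K) with hPdef
  have hherm : ((2⁻¹ : ℂ) • K).IsHermitian := by
    unfold Matrix.IsHermitian
    rw [Matrix.conjTranspose_smul, hK.eq]
    norm_num
  have hP : P.IsHermitian := hherm.exp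
  have hPP : exp K = P * Pᴴ := by
    rw [hP.eq, hPdef, ← Matrix.exp_add_of_commute _ _ (Commute.refl _)]
    congr 1
    rw [← add_smul]
    norm_num
  have htr : (exp K).trace = ((∑ i, ∑ j, Complex.normSq (P i j) : ℝ) : ℂ) := by
    rw [hPP]
    simp only [Matrix.trace, Matrix.diag, Matrix.mul_apply, Matrix.conjTranspose_apply]
    push_cast
    congr 1; ext i; congr 1; ext j
    rw [← Complex.mul_conj]
    rfl
  rw [htr]
  have hPne : P ≠ 0 := by
    intro h0
    have := (Matrix.isUnit_exp ((2⁻¹ : ℂ) • K)).ne_zero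
    exact this (by rwa [← hPdef])
  have hentry : ∃ i j, P i j ≠ 0 := by
    by_contra h; push_neg at h; exact hPne (Matrix.ext fun i j => h i j)
  obtain ⟨i, j, hij⟩ := hentry
  have hpos : 0 < ∑ i, ∑ j, Complex.normSq (P i j) := by
    have hnonneg : ∀ i ∈ Finset.univ, (0:ℝ) ≤ ∑ j, Complex.normSq (P i j) :=
      fun i _ => Finset.sum_nonneg fun j _ => Complex.normSq_nonneg _
    calc (0:ℝ) < Complex.normSq (P i j) := Complex.normSq_pos.mpr hij
      _ ≤ ∑ j, Complex.normSq (P i j) :=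
        Finset.single_le_sum (fun j _ => Complex.normSq_nonneg _) (Finset.mem_univ j)
      _ ≤ ∑ i, ∑ j, Complex.normSq (P i j) :=
        Finset.single_le_sum hnonneg (Finset.mem_univ i)
  exact_mod_cast hpos.ne'

lemma TF.exp_smul_mul (K : Matrix (Fin N) (Fin N) ℂ) (κ : ℝ) :
    exp (((1-κ:ℝ):ℂ) • K) * exp ((κ:ℂ) • K) = exp K := by
  rw [← Matrix.exp_add_of_commute _ _ (((Commute.refl K).smul_left _).smul_right _)]
  rw [← add_smul]
  push_cast
  norm_num

end Aux

set_option maxHeartbeats 2000000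

/-- The truncation formula (Eq. (12) of the paper) in integrated form: for Hermitian `H`,
`H∂`, with `H(s) := H − s·H∂`, `Z(s) := tr exp(−βH(s))` and `ρ(s) := exp(−βH(s))/Z(s)`,
`tr(ρ(1)·O) − tr(ρ(0)·O)
  = β·∫₀¹∫₀¹ [tr(exp(−β(1−κ)H(s))·H∂·exp(−βκH(s))·O)/Z(s)
              − tr(ρ(s)·O)·tr(ρ(s)·H∂)] dκ ds`. -/
theorem truncation_formula {N : ℕ} (H Hpart O : Matrix (Fin N) (Fin N) ℂ)
    (hH : H.IsHermitian) (hHpart : Hpart.IsHermitian) (β : ℝ) :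
    (gibbsState H Hpart β 1 * O).trace - (gibbsState H Hpart β 0 * O).trace =
      (β : ℂ) * ∫ s in (0 : ℝ)..1, ∫ κ in (0 : ℝ)..1,
        ((expH H Hpart s (β * (1 - κ)) * Hpart * expH H Hpart s (β * κ) * O).trace /
            (expH H Hpart s β).trace -
          (gibbsState H Hpart β s * O).trace * (gibbsState H Hpart β s * Hpart).trace) := by
  open NormedSpace Matrix intervalIntegral MeasureTheory Filter in
  rcases eq_or_ne N 0 with rfl | hN
  · simp [Matrix.trace, Finset.univ_eq_empty]
  · -- setup
    set A₀ : Matrix (Fin N) (Fin N) ℂ := (-(β:ℂ)) • H with hA₀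
    set B : Matrix (Fin N) (Fin N) ℂ := (β:ℂ) • Hpart with hB
    have hsmul : ∀ (u : ℝ) (x : Matrix (Fin N) (Fin N) ℂ), u • x = (u:ℂ) • x := fun u x => by
      rw [← smul_one_smul ℂ u x, Complex.real_smul, mul_one]
    have hA : ∀ u : ℝ, A₀ + u • B = (-(β:ℂ)) • (H - (u:ℂ) • Hpart) := by
      intro u
      rw [hsmul, hA₀, hB]
      module
    have hE : ∀ u : ℝ, expH H Hpart u β = exp (A₀ + u • B) := by
      intro u; rw [hA]; rfl
    have hcast1 : ∀ u κ : ℝ, exp ((κ:ℂ) • (A₀ + u • B)) = expH H Hpart u (β * κ) := by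
      intro u κ
      rw [hA]
      show _ = exp _
      rw [smul_smul]
      congr 2
      push_cast
      ring
    have hcast2 : ∀ u κ : ℝ, exp (((1-κ:ℝ):ℂ) • (A₀ + u • B)) = expH H Hpart u (β * (1-κ)) := by
      intro u κ
      rw [hA]
      show _ = exp _
      rw [smul_smul]
      congr 2
      push_cast
      ring
    have hherm : ∀ u : ℝ, (A₀ + u • B).IsHermitian := by
      intro u
      rw [hA]
      unfold Matrix.IsHermitian
      rw [Matrix.conjTranspose_smul, Matrix.conjTranspose_sub, Matrix.conjTranspose_smul,
        hH.eq, hHpart.eq]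
      simp [Complex.star_def, Complex.conj_ofReal]
    set Z : ℝ → ℂ := fun u => (exp (A₀ + u • B)).trace with hZdef
    have hZ : ∀ u, Z u ≠ 0 := fun u => TF.trace_exp_ne_zero hN _ (hherm u)
    set W : ℝ → ℂ := fun u => (exp (A₀ + u • B) * O).trace with hWdef
    set D : ℝ → Matrix (Fin N) (Fin N) ℂ := fun u =>
      ∫ κ in (0:ℝ)..1,
        exp ((κ:ℂ) • (A₀ + u • B)) * B * exp (((1-κ:ℝ):ℂ) • (A₀ + u • B)) with hDdef
    have hD : ∀ u, HasDerivAt (fun v : ℝ => exp (A₀ + v • B)) (D u) u := fun u =>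
      TF.hasDerivAt_exp_affine A₀ B u
    have hWd : ∀ u, HasDerivAt W ((D u * O).trace) u := by
      intro u
      have := (((TF.trO N O).restrictScalars ℝ).hasFDerivAt).comp_hasDerivAt u (hD u)
      simpa [Function.comp_def, hWdef] using this
    have hZd : ∀ u, HasDerivAt Z ((D u).trace) u := by
      intro u
      have := (((TF.trCLM N).restrictScalars ℝ).hasFDerivAt).comp_hasDerivAt u (hD u)
      simpa [Function.comp_def, hZdef] using this
    set f : ℝ → ℂ := fun u => W u / Z u with hfdef
    have hfd : ∀ u, HasDerivAt f
        (((D u * O).trace * Z u - W u * (D u).trace) / Z u ^ 2) u :=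
      fun u => (hWd u).div (hZd u) (hZ u)
    -- continuity facts
    have hDcont : Continuous D := by
      apply continuous_parametric_intervalIntegral_of_continuous'
      exact TF.cont_aux (fun y => A₀ + y • B) (by fun_prop) (fun y => A₀ + y • B) (by fun_prop) B
    have hEcont : Continuous fun u : ℝ => exp (A₀ + u • B) :=
      exp_continuous.comp (by fun_prop)
    have hZcont : Continuous Z := (TF.trCLM N).continuous.comp hEcont
    have hWcont : Continuous W := (TF.trO N O).continuous.comp hEcont
    have hgcont : Continuous fun u =>
        ((D u * O).trace * Z u - W u * (D u).trace) / Z u ^ 2 := by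
      apply Continuous.div
      · exact (((TF.trO N O).continuous.comp hDcont).mul hZcont).sub
          (hWcont.mul ((TF.trCLM N).continuous.comp hDcont))
      · exact hZcont.pow 2
      · exact fun u => pow_ne_zero 2 (hZ u)
    -- FTC
    have hFTC : ∫ u in (0:ℝ)..1,
        ((D u * O).trace * Z u - W u * (D u).trace) / Z u ^ 2 = f 1 - f 0 :=
      intervalIntegral.integral_eq_sub_of_hasDerivAt (fun u _ => hfd u)
        (hgcont.intervalIntegrable 0 1)
    -- rewrite goal LHS
    have hgibbs : ∀ (u : ℝ) (X : Matrix (Fin N) (Fin N) ℂ),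
        (gibbsState H Hpart β u * X).trace = (exp (A₀ + u • B) * X).trace / Z u := by
      intro u X
      rw [gibbsState, hE u, Matrix.smul_mul, Matrix.trace_smul, smul_eq_mul, div_eq_inv_mul]
    rw [hgibbs 1 O, hgibbs 0 O]
    -- pointwise identity for the derivative
    have hpoint : ∀ u : ℝ,
        ((D u * O).trace * Z u - W u * (D u).trace) / Z u ^ 2 =
        (β : ℂ) * ∫ κ in (0:ℝ)..1,
          ((expH H Hpart u (β * (1 - κ)) * Hpart * expH H Hpart u (β * κ) * O).trace /
              (expH H Hpart u β).trace -
            (gibbsState H Hpart β u * O).trace * (gibbsState H Hpart β u * Hpart).trace) := by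
      intro u
      set K := A₀ + u • B with hK
      -- canonical inner integrand
      have hinteq : ∀ κ : ℝ,
          ((expH H Hpart u (β * (1 - κ)) * Hpart * expH H Hpart u (β * κ) * O).trace /
              (expH H Hpart u β).trace -
            (gibbsState H Hpart β u * O).trace * (gibbsState H Hpart β u * Hpart).trace) =
          ((exp (((1-κ:ℝ):ℂ) • K) * Hpart * exp ((κ:ℂ) • K) * O).trace / Z u -
            (W u / Z u) * ((exp K * Hpart).trace / Z u)) := by
        intro κ
        rw [← hcast1 u κ, ← hcast2 u κ, hE u, hgibbs u O, hgibbs u Hpart]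
      rw [intervalIntegral.integral_congr (fun κ _ => hinteq κ)]
      -- split the integral
      set T : ℂ := ∫ κ in (0:ℝ)..1,
        (exp ((κ:ℂ) • K) * Hpart * exp (((1-κ:ℝ):ℂ) • K) * O).trace with hT
      have hqcont : Continuous fun κ : ℝ =>
          (exp (((1-κ:ℝ):ℂ) • K) * Hpart * exp ((κ:ℂ) • K) * O).trace / Z u :=
        ((TF.trCLM N).continuous.comp (TF.contκ' K Hpart O)).div_const _
      have hsplit : (∫ κ in (0:ℝ)..1,
          ((exp (((1-κ:ℝ):ℂ) • K) * Hpart * exp ((κ:ℂ) • K) * O).trace / Z u -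
            (W u / Z u) * ((exp K * Hpart).trace / Z u))) =
          (∫ κ in (0:ℝ)..1,
            (exp (((1-κ:ℝ):ℂ) • K) * Hpart * exp ((κ:ℂ) • K) * O).trace / Z u) -
          (W u / Z u) * ((exp K * Hpart).trace / Z u) := by
        rw [intervalIntegral.integral_sub (hqcont.intervalIntegrable 0 1)
          (intervalIntegrable_const)]
        simp
      rw [hsplit]
      -- substitution κ ↦ 1 - κ
      have hsub : (∫ κ in (0:ℝ)..1,
          (exp (((1-κ:ℝ):ℂ) • K) * Hpart * exp ((κ:ℂ) • K) * O).trace / Z u) = T / Z u := by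
        have h1 : (∫ κ in (0:ℝ)..1,
            (exp (((1-κ:ℝ):ℂ) • K) * Hpart * exp ((κ:ℂ) • K) * O).trace / Z u) =
            ∫ κ in (0:ℝ)..1, (fun x : ℝ =>
              (exp ((x:ℂ) • K) * Hpart * exp (((1-x:ℝ):ℂ) • K) * O).trace / Z u) (1 - κ) := by
          apply intervalIntegral.integral_congr
          intro κ _
          simp only [sub_sub_cancel]
        rw [h1, intervalIntegral.integral_comp_sub_left (fun x : ℝ =>
          (exp ((x:ℂ) • K) * Hpart * exp (((1-x:ℝ):ℂ) • K) * O).trace / Z u) 1]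
        norm_num [hT, intervalIntegral.integral_div]
      rw [hsub]
      -- compute (D u * O).trace and (D u).trace
      have hDO : (D u * O).trace = (β:ℂ) * T := by
        have h1 : (D u * O).trace = TF.trO N O (D u) := rfl
        rw [h1, hDdef]
        rw [← (TF.trO N O).intervalIntegral_comp_comm ((TF.contκ K B).intervalIntegrable 0 1)]
        rw [hT, ← intervalIntegral.integral_const_mul]
        apply intervalIntegral.integral_congr
        intro κ _
        simp only [TF.trO_apply, hB]
        rw [mul_smul_comm, Matrix.smul_mul, Matrix.smul_mul, Matrix.trace_smul, smul_eq_mul]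
      have hDtr : (D u).trace = (β:ℂ) * (exp K * Hpart).trace := by
        have h1 : (D u).trace = TF.trCLM N (D u) := rfl
        rw [h1, hDdef]
        rw [← (TF.trCLM N).intervalIntegral_comp_comm ((TF.contκ K B).intervalIntegrable 0 1)]
        have h2 : ∀ κ : ℝ, TF.trCLM N
            (exp ((κ:ℂ) • K) * B * exp (((1-κ:ℝ):ℂ) • K)) =
            (β:ℂ) * (exp K * Hpart).trace := by
          intro κ
          simp only [TF.trCLM_apply]
          rw [Matrix.trace_mul_cycle, TF.exp_smul_mul K κ, hB,
            mul_smul_comm, Matrix.trace_smul, smul_eq_mul]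
        rw [intervalIntegral.integral_congr (fun κ _ => h2 κ)]
        simp
      rw [hDO, hDtr]
      field_simp [hZ u]
    -- conclude
    calc W 1 / Z 1 - W 0 / Z 0
        = ∫ u in (0:ℝ)..1, ((D u * O).trace * Z u - W u * (D u).trace) / Z u ^ 2 := hFTC.symm
      _ = ∫ u in (0:ℝ)..1, (β : ℂ) * ∫ κ in (0:ℝ)..1,
          ((expH H Hpart u (β * (1 - κ)) * Hpart * expH H Hpart u (β * κ) * O).trace /
              (expH H Hpart u β).trace -
            (gibbsState H Hpart β u * O).trace * (gibbsState H Hpart β u * Hpart).trace) :=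
          intervalIntegral.integral_congr (fun u _ => hpoint u)
      _ = _ := intervalIntegral.integral_const_mul _ _
end
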